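/- Let (g_i) be a sequence of nonnegative functions g_i : ℝ³ → ℝ, each of which is bounded on every bounded subset of ℝ³. Then there is a subsequence (g_{i_j}) such that for every point x ∈ ℝ³ at least one of the following two alternatives holds: (a) for every r > 0, sup over the closed ball of radius r about x of g_{i_j} tends to ∞ as j → ∞; or (b) there exists r > 0 such that sup over j of (sup over the closed ball of radius r about x of g_{i_j}) is finite. -/

import Mathlib

open Metric Set Filter Topology

/-- Lemma 5.1 (abstract form): given a sequence of nonnegative functions `g i : ℝ³ → ℝ`, each
bounded on bounded sets, there is a subsequence so that at every point `x ∈ ℝ³` either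
(a) the sup of `g` over every ball around `x` blows up, or (b) the sups over some fixed ball
around `x` are uniformly bounded. -/
theorem stmt1 (g : ℕ → EuclideanSpace ℝ (Fin 3) → ℝ)
    (hg0 : ∀ i x, 0 ≤ g i x)
    (hgb : ∀ i, ∀ B : Set (EuclideanSpace ℝ (Fin 3)), Bornology.IsBounded B →
      ∃ M : ℝ, ∀ x ∈ B, g i x ≤ M) :
    ∃ φ : ℕ → ℕ, StrictMono φ ∧
      ∀ x : EuclideanSpace ℝ (Fin 3),
        (∀ r > 0, Tendsto (fun j => sSup (g (φ j) '' Metric.closedBall x r)) atTop atTop) ∨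
        (∃ r > 0, ∃ M : ℝ, ∀ j, ∀ y ∈ Metric.closedBall x r, g (φ j) y ≤ M) := by
  classical
  obtain ⟨c, hc⟩ : ∃ c : ℕ → EuclideanSpace ℝ (Fin 3), DenseRange c :=
    ⟨TopologicalSpace.denseSeq _, TopologicalSpace.denseRange_denseSeq _⟩
  let e : ℕ ≃ ℕ × ℕ := (Denumerable.eqv (ℕ × ℕ)).symm
  let ctr : ℕ → EuclideanSpace ℝ (Fin 3) := fun k => c (e k).1
  let rad : ℕ → ℝ := fun k => 2 * (((e k).2 : ℝ) + 1)⁻¹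
  have hrad : ∀ k, 0 < rad k := by
    intro k
    have : (0 : ℝ) < ((e k).2 : ℝ) + 1 := by positivity
    positivity
  let B : ℕ → Set (EuclideanSpace ℝ (Fin 3)) := fun k => Metric.closedBall (ctr k) (rad k)
  have hBdd : ∀ i k, BddAbove (g i '' B k) := by
    intro i k
    obtain ⟨M, hM⟩ := hgb i (B k) isBounded_closedBall
    exact ⟨M, fun y ⟨z, hz, hzy⟩ => hzy ▸ hM z hz⟩
  let a : ℕ → ℕ → ℝ := fun i k => sSup (g i '' B k)
  have hmem : ∀ i k, g i (ctr k) ∈ g i '' B k := fun i k =>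
    ⟨ctr k, mem_closedBall_self (hrad k).le, rfl⟩
  have ha0 : ∀ i k, 0 ≤ a i k := fun i k =>
    le_trans (hg0 i (ctr k)) (le_csSup (hBdd i k) (hmem i k))
  let u : ℕ → (ℕ → ENNReal) := fun i k => ENNReal.ofReal (a i k)
  obtain ⟨L, φ, hφ, hconv⟩ := CompactSpace.tendsto_subseq u
  have hpt : ∀ k, Tendsto (fun j => u (φ j) k) atTop (𝓝 (L k)) := fun k =>
    (tendsto_pi_nhds.1 hconv) k
  refine ⟨φ, hφ, ?_⟩
  intro x
  by_cases h : ∃ k, x ∈ Metric.ball (ctr k) (rad k) ∧ L k ≠ ⊤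
  · right
    obtain ⟨k, hxk, hLk⟩ := h
    have hxk' : dist x (ctr k) < rad k := mem_ball.1 hxk
    refine ⟨rad k - dist x (ctr k), by linarith, ?_⟩
    have hlt : L k < L k + 1 := ENNReal.lt_add_right hLk one_ne_zero
    have hev : ∀ᶠ j in atTop, u (φ j) k ≤ L k + 1 :=
      (hpt k).eventually (eventually_le_nhds hlt)
    obtain ⟨N, hN⟩ := eventually_atTop.1 hev
    obtain ⟨M1, hM1⟩ : ∃ M1 : ℝ, ∀ j < N, a (φ j) k ≤ M1 := by
      obtain ⟨M1, hM1⟩ := ((Set.finite_Iio N).image (fun j => a (φ j) k)).bddAbove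
      exact ⟨M1, fun j hj => hM1 ⟨j, hj, rfl⟩⟩
    refine ⟨max M1 ((L k + 1).toReal), ?_⟩
    intro j y hy
    have hyB : y ∈ B k := by
      have h1 : dist y x ≤ rad k - dist x (ctr k) := mem_closedBall.1 hy
      have h2 : dist y (ctr k) ≤ dist y x + dist x (ctr k) := dist_triangle _ _ _
      exact mem_closedBall.2 (by linarith)
    have hga : g (φ j) y ≤ a (φ j) k := le_csSup (hBdd _ _) ⟨y, hyB, rfl⟩
    rcases lt_or_ge j N with hj | hj
    · exact hga.trans ((hM1 j hj).trans (le_max_left _ _))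
    · have hu := hN j hj
      have h1 : L k + 1 ≠ ⊤ := by
        simp [ENNReal.add_ne_top, hLk]
      have h2 := ENNReal.toReal_mono h1 hu
      rw [ENNReal.toReal_ofReal (ha0 _ _)] at h2
      exact hga.trans (h2.trans (le_max_right _ _))
  · left
    push_neg at h
    intro r hr
    obtain ⟨n, hn⟩ := exists_nat_gt (3 / r)
    have hn1 : (0 : ℝ) < (n : ℝ) + 1 := by positivity
    obtain ⟨m, hm⟩ : ∃ m, dist x (c m) < ((n : ℝ) + 1)⁻¹ :=
      hc.exists_dist_lt x (by positivity)
    set k := e.symm (m, n) with hk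
    have hek : e k = (m, n) := e.apply_symm_apply _
    have hctr : ctr k = c m := by simp [ctr, hek]
    have hrad' : rad k = 2 * ((n : ℝ) + 1)⁻¹ := by simp [rad, hek]
    have hinv : (0 : ℝ) < ((n : ℝ) + 1)⁻¹ := by positivity
    have hxball : x ∈ Metric.ball (ctr k) (rad k) := by
      rw [mem_ball, hctr, hrad']
      calc dist x (c m) < ((n : ℝ) + 1)⁻¹ := hm
        _ ≤ 2 * ((n : ℝ) + 1)⁻¹ := by linarith
    have hLk : L k = ⊤ := h k hxball
    have h3r : 3 * ((n : ℝ) + 1)⁻¹ ≤ r := by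
      have h1 : 3 < (n : ℝ) * r := by
        have := (div_lt_iff₀ hr).1 hn
        linarith
      rw [mul_inv_le_iff₀ hn1]
      nlinarith
    have hsub : B k ⊆ Metric.closedBall x r := by
      intro y hy
      have h1 : dist y (ctr k) ≤ rad k := mem_closedBall.1 hy
      rw [hrad'] at h1
      have h2 : dist y x ≤ dist y (ctr k) + dist (ctr k) x := dist_triangle _ _ _
      have h3 : dist (ctr k) x < ((n : ℝ) + 1)⁻¹ := by
        rw [hctr, dist_comm]; exact hm
      exact mem_closedBall.2 (by linarith)
    have hdiv : Tendsto (fun j => a (φ j) k) atTop atTop := by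
      rw [Filter.tendsto_atTop]
      intro C
      have hC : ENNReal.ofReal (max C 0 + 1) < ⊤ := ENNReal.ofReal_lt_top
      have hev : ∀ᶠ j in atTop, ENNReal.ofReal (max C 0 + 1) < u (φ j) k := by
        rw [← hLk] at hC
        exact (hpt k).eventually (eventually_gt_nhds (hLk ▸ ENNReal.ofReal_lt_top))
      filter_upwards [hev] with j hj
      by_contra hcon
      push_neg at hcon
      have : a (φ j) k ≤ max C 0 + 1 := le_trans hcon.le (by
        calc C ≤ max C 0 := le_max_left _ _
          _ ≤ max C 0 + 1 := by linarith)
      exact absurd (ENNReal.ofReal_le_ofReal this) (not_le.2 hj)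
    refine tendsto_atTop_mono (fun j => ?_) hdiv
    apply csSup_le_csSup
    · obtain ⟨M, hM⟩ := hgb (φ j) (Metric.closedBall x r) isBounded_closedBall
      exact ⟨M, fun y ⟨z, hz, hzy⟩ => hzy ▸ hM z hz⟩
    · exact ⟨g (φ j) (ctr k), hmem _ _⟩
    · exact Set.image_mono hsub
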